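/- Let S, M ∈ ℂ^{m×m} and H ∈ ℂ^{N×N}. Then the set of eigenvalues of I_N ⊗ S − H ⊗ M equals the union, over all eigenvalues λ of H, of the sets of eigenvalues of S − λM. -/

import Mathlib

open Matrix
open scoped Kronecker

lemma charpoly_isRoot_iff {n : Type*} [Fintype n] [DecidableEq n] (A : Matrix n n ℂ) (μ : ℂ) :
    A.charpoly.IsRoot μ ↔ ∃ v, v ≠ 0 ∧ A.mulVec v = μ • v := by
  have heval : A.charpoly.eval μ = (μ • (1 : Matrix n n ℂ) - A).det := by
    rw [Matrix.charpoly, _root_.eval_det, Matrix.matPolyEquiv_charmatrix,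
      Polynomial.eval_sub, Polynomial.eval_X, Polynomial.eval_C]
    congr 2
    ext i j
    simp [Matrix.scalar_apply, Matrix.diagonal_apply, Matrix.one_apply, mul_ite]
  constructor
  · intro h
    have hdet : (μ • (1 : Matrix n n ℂ) - A).det = 0 := by rw [← heval]; exact h
    obtain ⟨v, hv, hv0⟩ := (Matrix.exists_mulVec_eq_zero_iff).2 hdet
    refine ⟨v, hv, ?_⟩
    rw [Matrix.sub_mulVec, Matrix.smul_mulVec, Matrix.one_mulVec, sub_eq_zero] at hv0
    exact hv0.symm
  · rintro ⟨v, hv, hAv⟩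
    have h0 : (μ • (1 : Matrix n n ℂ) - A).mulVec v = 0 := by
      rw [Matrix.sub_mulVec, Matrix.smul_mulVec, Matrix.one_mulVec, hAv, sub_self]
    show A.charpoly.eval μ = 0
    rw [heval]
    exact (Matrix.exists_mulVec_eq_zero_iff).1 ⟨v, hv, h0⟩

lemma charpoly_transpose' {n : Type*} [Fintype n] [DecidableEq n] {R : Type*} [CommRing R]
    (A : Matrix n n R) : Aᵀ.charpoly = A.charpoly := by
  rw [Matrix.charpoly, Matrix.charpoly, ← Matrix.det_transpose (Matrix.charmatrix A)]
  congr 1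
  ext i j
  by_cases h : i = j
  · subst h; simp
  · simp [Matrix.charmatrix_apply_ne _ _ _ h, Matrix.charmatrix_apply_ne _ _ _ (Ne.symm h)]

lemma kron_mulVec {N m : ℕ} (A : Matrix (Fin N) (Fin N) ℂ) (B : Matrix (Fin m) (Fin m) ℂ)
    (v : Fin N → ℂ) (w : Fin m → ℂ) :
    (A ⊗ₖ B).mulVec (fun p => v p.1 * w p.2) = fun p => A.mulVec v p.1 * B.mulVec w p.2 := by
  ext p
  simp only [Matrix.mulVec, dotProduct, Fintype.sum_prod_type, Matrix.kroneckerMap_apply]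
  rw [Finset.sum_mul_sum]
  exact Finset.sum_congr rfl fun j _ => Finset.sum_congr rfl fun l _ => by ring

lemma kron_mulVec_gen {N m : ℕ} (A : Matrix (Fin N) (Fin N) ℂ) (B : Matrix (Fin m) (Fin m) ℂ)
    (x : Fin N × Fin m → ℂ) :
    (A ⊗ₖ B).mulVec x = fun p => ∑ j, A p.1 j * (B.mulVec fun l => x (j, l)) p.2 := by
  ext p
  simp only [Matrix.mulVec, dotProduct, Fintype.sum_prod_type, Matrix.kroneckerMap_apply,
    Finset.mul_sum]
  exact Finset.sum_congr rfl fun j _ => Finset.sum_congr rfl fun l _ => by ring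

theorem eigenvalues_kronecker_shift
    (m N : ℕ) (S M : Matrix (Fin m) (Fin m) ℂ) (H : Matrix (Fin N) (Fin N) ℂ) :
    {μ : ℂ | ((1 : Matrix (Fin N) (Fin N) ℂ) ⊗ₖ S - H ⊗ₖ M).charpoly.IsRoot μ}
      = ⋃ lam ∈ {lam : ℂ | H.charpoly.IsRoot lam},
          {μ : ℂ | (S - lam • M).charpoly.IsRoot μ} := by
  ext μ
  simp only [Set.mem_setOf_eq, Set.mem_iUnion, exists_prop]
  constructor
  · -- hard direction
    intro hμ
    obtain ⟨x, hx0, hx⟩ := (charpoly_isRoot_iff _ μ).1 hμ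
    by_contra hcon
    push_neg at hcon
    set Xmat : Matrix (Fin m) (Fin N) ℂ := Matrix.of fun k j => x (j, k) with hXmat
    -- the matrix relation S X - M X Hᵀ = μ X
    have hrelM : S * Xmat - M * (Xmat * Hᵀ) = μ • Xmat := by
      ext k i
      have hx' := hx
      rw [Matrix.sub_mulVec] at hx'
      have h1 := congrFun hx' (i, k)
      simp only [Pi.sub_apply, kron_mulVec_gen, Matrix.one_apply, ite_mul, one_mul, zero_mul,
        Finset.sum_ite_eq, Finset.mem_univ, if_true, Pi.smul_apply, smul_eq_mul] at h1
      simp only [Matrix.sub_apply, Matrix.smul_apply, Matrix.mul_apply, hXmat, Matrix.of_apply,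
        smul_eq_mul, Matrix.mulVec, dotProduct, Matrix.transpose_apply] at h1 ⊢
      rw [← h1]
      congr 1
      simp only [Finset.mul_sum]
      rw [Finset.sum_comm]
      exact Finset.sum_congr rfl fun j _ => Finset.sum_congr rfl fun l _ => by ring
    have hrel : ∀ u : Fin N → ℂ,
        S.mulVec (Xmat.mulVec u) - M.mulVec (Xmat.mulVec (Hᵀ.mulVec u)) = μ • Xmat.mulVec u := by
      intro u
      have h := congrArg (fun B : Matrix (Fin m) (Fin N) ℂ => B.mulVec u) hrelM
      simpa only [Matrix.sub_mulVec, Matrix.mulVec_mulVec, Matrix.smul_mulVec] using h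
    set f : Module.End ℂ (Fin N → ℂ) := Hᵀ.mulVecLin with hf
    have key : ∀ lam : ℂ, ∀ u, u ∈ f.maxGenEigenspace lam → Xmat.mulVec u = 0 := by
      intro lam u hu
      rw [Module.End.mem_maxGenEigenspace] at hu
      obtain ⟨k, hk⟩ := hu
      by_cases hroot : H.charpoly.IsRoot lam
      · have hno := hcon lam hroot
        induction k generalizing u with
        | zero => simp only [pow_zero, Module.End.one_apply] at hk; rw [hk, Matrix.mulVec_zero]
        | succ k ih =>
          rw [pow_succ, Module.End.mul_apply] at hk
          have hprev := ih _ hk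
          have hsub : (f - lam • (1 : Module.End ℂ (Fin N → ℂ))) u = Hᵀ.mulVec u - lam • u := by
            simp only [LinearMap.sub_apply, LinearMap.smul_apply, Module.End.one_apply, hf,
              Matrix.mulVecLin_apply]
          rw [hsub, Matrix.mulVec_sub, Matrix.mulVec_smul, sub_eq_zero] at hprev
          have h2 := hrel u
          rw [hprev, Matrix.mulVec_smul] at h2
          by_contra hy
          apply hno
          refine (charpoly_isRoot_iff _ μ).2 ⟨Xmat.mulVec u, hy, ?_⟩
          rw [Matrix.sub_mulVec, Matrix.smul_mulVec]
          exact h2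
      · have hu0 : u = 0 := by
          induction k generalizing u with
          | zero => simpa using hk
          | succ k ih =>
            rw [pow_succ, Module.End.mul_apply] at hk
            have h1 := ih _ hk
            by_contra hune
            apply hroot
            rw [← charpoly_transpose' H]
            refine (charpoly_isRoot_iff _ lam).2 ⟨u, hune, ?_⟩
            have h2 : Hᵀ.mulVec u - lam • u = 0 := by
              simpa only [LinearMap.sub_apply, LinearMap.smul_apply, Module.End.one_apply, hf,
                Matrix.mulVecLin_apply] using h1
            rwa [sub_eq_zero] at h2
        rw [hu0, Matrix.mulVec_zero]
    have hker : ∀ u, Xmat.mulVec u = 0 := by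
      intro u
      have hle : (⨆ lam : ℂ, f.maxGenEigenspace lam) ≤ LinearMap.ker Xmat.mulVecLin :=
        iSup_le fun lam => fun w hw => LinearMap.mem_ker.2
          (by simpa [Matrix.mulVecLin_apply] using key lam w hw)
      rw [Module.End.iSup_maxGenEigenspace_eq_top f] at hle
      have := hle (Submodule.mem_top : u ∈ (⊤ : Submodule ℂ (Fin N → ℂ)))
      simpa [Matrix.mulVecLin_apply] using this
    apply hx0
    funext p
    have hp := congrFun (hker (Pi.single p.1 1)) p.2
    simp only [Matrix.mulVec_single_one, mul_one, Pi.zero_apply] at hp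
    exact hp
  · rintro ⟨lam, hlam, hμ⟩
    obtain ⟨v, hv, hHv⟩ := (charpoly_isRoot_iff H lam).1 hlam
    obtain ⟨w, hw, hSw⟩ := (charpoly_isRoot_iff _ μ).1 hμ
    refine (charpoly_isRoot_iff _ μ).2 ⟨fun p => v p.1 * w p.2, ?_, ?_⟩
    · rw [Function.ne_iff] at hv hw ⊢
      obtain ⟨i, hi⟩ := hv
      obtain ⟨k, hk⟩ := hw
      exact ⟨(i, k), mul_ne_zero hi hk⟩
    · have hSw' : S.mulVec w = μ • w + lam • M.mulVec w := by
        rw [Matrix.sub_mulVec, Matrix.smul_mulVec] at hSw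
        exact eq_add_of_sub_eq hSw
      funext p
      rw [Matrix.sub_mulVec]
      have e1 := congrFun (kron_mulVec (1 : Matrix (Fin N) (Fin N) ℂ) S v w) p
      have e2 := congrFun (kron_mulVec H M v w) p
      simp only [Pi.sub_apply, e1, e2, Matrix.one_mulVec, hHv, hSw', Pi.smul_apply, smul_eq_mul,
        Pi.add_apply]
      ring
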